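/- Let X be a compact metric space, f₁,…,f_k continuous self-maps, ℙ the Bernoulli measure on Σ = {1,…,k}^ℕ with positive weights, and Q ⊆ X. Suppose there exists ℓ ∈ ℕ such that p := inf over y in the orbit of x of the probability (under the uniform measure on words of length ℓ) that some prefix of the word maps y into Q, is strictly positive. Then for ℙ-almost every ω ∈ Σ, there exists n ≥ 1 with f^n_ω(x) ∈ Q. -/

import Mathlib

open MeasureTheory
open scoped ENNReal

/-- Apply the maps of an IFS along a finite word: `f_{w_n} ∘ ⋯ ∘ f_{w_1}`. -/
def applyWord {X : Type*} {k : ℕ} (f : Fin k → X → X) (w : List (Fin k)) (x : X) : X :=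
  w.foldl (fun y i => f i y) x

/-- The fiberwise iterate `f^n_ω(x) = f_{ω_n} ∘ ⋯ ∘ f_{ω_1}(x)` (0-indexed `ω`). -/
def fIter {X : Type*} {k : ℕ} (f : Fin k → X → X) (ω : ℕ → Fin k) (x : X) : ℕ → X
  | 0 => x
  | n + 1 => f (ω n) (fIter f ω x n)



lemma applyWord_append {X : Type*} {k : ℕ} (f : Fin k → X → X) (w₁ w₂ : List (Fin k)) (x : X) :
    applyWord f (w₁ ++ w₂) x = applyWord f w₂ (applyWord f w₁ x) :=
  List.foldl_append

lemma fIter_eq_applyWord {X : Type*} {k : ℕ} (f : Fin k → X → X) (ω : ℕ → Fin k) (x : X)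
    (n : ℕ) : fIter f ω x n = applyWord f (List.ofFn (fun i : Fin n => ω i)) x := by
  induction n with
  | zero => simp [fIter, applyWord]
  | succ n ih =>
    rw [List.ofFn_succ']
    simp only [List.concat_eq_append, applyWord_append, Fin.coe_castSucc, Fin.val_last]
    simp [fIter, ih, applyWord]

lemma take_ofFn_restrict {X : Type*} {k : ℕ} (f : Fin k → X → X) (ω : ℕ → Fin k) (x : X)
    {j n : ℕ} (h : j ≤ n) :
    applyWord f ((List.ofFn (fun i : Fin n => ω i)).take j) x = fIter f ω x j := by
  rw [← Fin.ofFn_take_eq_take_ofFn h, fIter_eq_applyWord]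
  rfl

lemma meas_restrict {k : ℕ} (μ : Measure (ℕ → Fin k)) (pw : Fin k → ℝ≥0∞)
    (hcyl : ∀ (n : ℕ) (w : Fin n → Fin k),
      μ {ω | ∀ i : Fin n, ω i = w i} = ∏ i, pw (w i))
    (n : ℕ) (T : Set (Fin n → Fin k)) :
    μ {ω | (fun i : Fin n => ω i) ∈ T}
      = ∑ w : Fin n → Fin k, T.indicator (fun w => ∏ i, pw (w i)) w := by
  classical
  have hset : {ω : ℕ → Fin k | (fun i : Fin n => ω i) ∈ T}
      = ⋃ w ∈ T.toFinset, {ω | ∀ i : Fin n, ω (i : ℕ) = w i} := by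
    ext ω
    simp only [Set.mem_setOf_eq, Set.mem_iUnion, Set.mem_toFinset]
    constructor
    · intro h; exact ⟨fun i => ω i, h, fun i => rfl⟩
    · rintro ⟨w, hw, hww⟩
      have hwe : (fun i : Fin n => ω (i : ℕ)) = w := funext hww
      rw [hwe]; exact hw
  rw [hset, measure_biUnion_finset]
  · rw [Finset.sum_congr rfl (fun w _ => hcyl n w)]
    have : ∀ w : Fin n → Fin k, T.indicator (fun w => ∏ i, pw (w i)) w
        = if w ∈ T.toFinset then ∏ i, pw (w i) else 0 := by
      intro w; simp [Set.indicator_apply, Set.mem_toFinset]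
    rw [Finset.sum_congr rfl (fun w _ => this w), Finset.sum_ite_mem, Finset.univ_inter]
  · intro w hw v hv hwv
    apply Set.disjoint_left.mpr
    intro ω hωw hωv
    exact hwv (funext fun i => (hωw i).symm.trans (hωv i))
  · intro w _
    have : {ω : ℕ → Fin k | ∀ i : Fin n, ω (i : ℕ) = w i}
        = ⋂ i : Fin n, (fun ω : ℕ → Fin k => ω (i : ℕ)) ⁻¹' {w i} := by
      ext ω; simp [Set.mem_iInter]
    rw [this]
    exact MeasurableSet.iInter fun i => (measurable_pi_apply _) (measurableSet_singleton _)

theorem stmt18 {X : Type*} [MetricSpace X] [CompactSpace X] {k : ℕ}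
    (f : Fin k → X → X) (hf : ∀ i, Continuous (f i))
    (μ : Measure (ℕ → Fin k)) [IsProbabilityMeasure μ]
    (pw : Fin k → ℝ≥0∞) (hpos : ∀ i, 0 < pw i) (hsum : ∑ i, pw i = 1)
    (hcyl : ∀ (n : ℕ) (w : Fin n → Fin k),
      μ {ω | ∀ i : Fin n, ω i = w i} = ∏ i, pw (w i))
    (Q : Set X) (x : X) (ℓ : ℕ) (hℓ : 1 ≤ ℓ) (p : ℝ≥0∞) (hp : 0 < p)
    -- for every `y` in the orbit of `x`, the words of length `ℓ` having a prefix
    -- mapping `y` into `Q` carry probability at least `p`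
    (hinf : ∀ y ∈ {z | ∃ w : List (Fin k), z = applyWord f w x},
      p ≤ ∑ w : Fin ℓ → Fin k,
        Set.indicator
          {w : Fin ℓ → Fin k |
            ∃ i : ℕ, 1 ≤ i ∧ i ≤ ℓ ∧ applyWord f ((List.ofFn w).take i) y ∈ Q}
          (fun w => ∏ i, pw (w i)) w) :
    ∀ᵐ ω ∂μ, ∃ n : ℕ, 1 ≤ n ∧ fIter f ω x n ∈ Q := by
  classical
  set E : (n : ℕ) → Set (Fin n → Fin k) := fun n =>
    {w | ∀ j : ℕ, 1 ≤ j → j ≤ n → applyWord f ((List.ofFn w).take j) x ∉ Q} with hE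
  set S : ℕ → ℝ≥0∞ := fun n =>
    ∑ w : Fin n → Fin k, (E n).indicator (fun w => ∏ i, pw (w i)) w with hSdef
  have htot : ∀ n : ℕ, ∑ w : Fin n → Fin k, ∏ i, pw (w i) = 1 := by
    intro n
    have h := meas_restrict μ pw hcyl n Set.univ
    simp only [Set.mem_univ, Set.setOf_true, measure_univ, Set.indicator_univ] at h
    exact h.symm
  have hS_le_one : ∀ n, S n ≤ 1 := by
    intro n
    calc S n ≤ ∑ w : Fin n → Fin k, ∏ i, pw (w i) :=
          Finset.sum_le_sum fun w _ => Set.indicator_le_self _ _ w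
      _ = 1 := htot n
  -- bad-block bound
  have hbad : ∀ y : X, (∃ w : List (Fin k), y = applyWord f w x) →
      (∑ v : Fin ℓ → Fin k,
        Set.indicator {v : Fin ℓ → Fin k | ∀ i : ℕ, 1 ≤ i → i ≤ ℓ →
            applyWord f ((List.ofFn v).take i) y ∉ Q}
          (fun v => ∏ i, pw (v i)) v) ≤ 1 - p := by
    intro y hy
    set G : Set (Fin ℓ → Fin k) :=
      {w | ∃ i : ℕ, 1 ≤ i ∧ i ≤ ℓ ∧ applyWord f ((List.ofFn w).take i) y ∈ Q} with hG
    have hcompl : {v : Fin ℓ → Fin k | ∀ i : ℕ, 1 ≤ i → i ≤ ℓ →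
        applyWord f ((List.ofFn v).take i) y ∉ Q} = Gᶜ := by
      ext v
      simp only [hG, Set.mem_setOf_eq, Set.mem_compl_iff, not_exists, not_and]
    rw [hcompl]
    have hGle : (∑ v : Fin ℓ → Fin k, G.indicator (fun v => ∏ i, pw (v i)) v) ≤ 1 := by
      calc _ ≤ ∑ v : Fin ℓ → Fin k, ∏ i, pw (v i) :=
            Finset.sum_le_sum fun v _ => Set.indicator_le_self _ _ v
        _ = 1 := htot ℓ
    have hadd : (∑ v : Fin ℓ → Fin k, G.indicator (fun v => ∏ i, pw (v i)) v)
        + (∑ v : Fin ℓ → Fin k, Gᶜ.indicator (fun v => ∏ i, pw (v i)) v) = 1 := by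
      rw [← Finset.sum_add_distrib]
      rw [Finset.sum_congr rfl fun v _ =>
        Set.indicator_self_add_compl_apply G (fun v => ∏ i, pw (v i)) v]
      exact htot ℓ
    have heq : (∑ v : Fin ℓ → Fin k, Gᶜ.indicator (fun v => ∏ i, pw (v i)) v)
        = 1 - (∑ v : Fin ℓ → Fin k, G.indicator (fun v => ∏ i, pw (v i)) v) :=
      ENNReal.eq_sub_of_add_eq (hGle.trans_lt ENNReal.one_lt_top).ne
        (by rw [add_comm]; exact hadd)
    rw [heq]
    exact tsub_le_tsub_left (hinf y hy) 1
  -- one-step estimate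
  have hstep : ∀ n : ℕ, S (n + ℓ) ≤ (1 - p) * S n := by
    intro n
    have hre : S (n + ℓ) = ∑ uv : (Fin n → Fin k) × (Fin ℓ → Fin k),
        (E (n + ℓ)).indicator (fun w => ∏ i, pw (w i)) (Fin.append uv.1 uv.2) :=
      (Fintype.sum_equiv (Fin.appendEquiv n ℓ)
        (fun uv => (E (n + ℓ)).indicator (fun w => ∏ i, pw (w i)) (Fin.append uv.1 uv.2))
        (fun w => (E (n + ℓ)).indicator (fun w => ∏ i, pw (w i)) w)
        (fun uv => rfl)).symm
    have key : ∀ (u : Fin n → Fin k) (v : Fin ℓ → Fin k),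
        (E (n + ℓ)).indicator (fun w => ∏ i, pw (w i)) (Fin.append u v)
        ≤ (E n).indicator (fun w => ∏ i, pw (w i)) u *
          Set.indicator {v : Fin ℓ → Fin k | ∀ i : ℕ, 1 ≤ i → i ≤ ℓ →
              applyWord f ((List.ofFn v).take i) (applyWord f (List.ofFn u) x) ∉ Q}
            (fun v => ∏ i, pw (v i)) v := by
      intro u v
      by_cases hw : Fin.append u v ∈ E (n + ℓ)
      · have hu : u ∈ E n := by
          intro j hj1 hj2
          have h := hw j hj1 (hj2.trans (Nat.le_add_right n ℓ))
          rwa [List.ofFn_fin_append, List.take_append, List.length_ofFn,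
            Nat.sub_eq_zero_of_le hj2, List.take_zero, List.append_nil] at h
        have hv : v ∈ {v : Fin ℓ → Fin k | ∀ i : ℕ, 1 ≤ i → i ≤ ℓ →
            applyWord f ((List.ofFn v).take i) (applyWord f (List.ofFn u) x) ∉ Q} := by
          intro i hi1 hi2
          have h := hw (n + i) (by omega) (by omega)
          rw [List.ofFn_fin_append, List.take_append, List.length_ofFn,
            List.take_of_length_le (by rw [List.length_ofFn]; omega),
            Nat.add_sub_cancel_left, applyWord_append] at h
          exact h
        rw [Set.indicator_of_mem hw, Set.indicator_of_mem hu, Set.indicator_of_mem hv]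
        rw [Fin.prod_univ_add]
        simp only [Fin.append_left, Fin.append_right]
        exact le_refl _
      · rw [Set.indicator_of_notMem hw]
        exact zero_le
    calc S (n + ℓ)
        = ∑ uv : (Fin n → Fin k) × (Fin ℓ → Fin k),
            (E (n + ℓ)).indicator (fun w => ∏ i, pw (w i)) (Fin.append uv.1 uv.2) := hre
      _ ≤ ∑ uv : (Fin n → Fin k) × (Fin ℓ → Fin k),
            (E n).indicator (fun w => ∏ i, pw (w i)) uv.1 *
            Set.indicator {v : Fin ℓ → Fin k | ∀ i : ℕ, 1 ≤ i → i ≤ ℓ →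
                applyWord f ((List.ofFn v).take i) (applyWord f (List.ofFn uv.1) x) ∉ Q}
              (fun v => ∏ i, pw (v i)) uv.2 :=
          Finset.sum_le_sum fun uv _ => key uv.1 uv.2
      _ = ∑ u : Fin n → Fin k, (E n).indicator (fun w => ∏ i, pw (w i)) u *
            ∑ v : Fin ℓ → Fin k,
              Set.indicator {v : Fin ℓ → Fin k | ∀ i : ℕ, 1 ≤ i → i ≤ ℓ →
                  applyWord f ((List.ofFn v).take i) (applyWord f (List.ofFn u) x) ∉ Q}
                (fun v => ∏ i, pw (v i)) v := by
          rw [Fintype.sum_prod_type]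
          exact Finset.sum_congr rfl fun u _ => by rw [Finset.mul_sum]
      _ ≤ ∑ u : Fin n → Fin k, (E n).indicator (fun w => ∏ i, pw (w i)) u * (1 - p) :=
          Finset.sum_le_sum fun u _ =>
            mul_le_mul_right (hbad _ ⟨List.ofFn u, rfl⟩) _
      _ = (1 - p) * S n := by
          rw [← Finset.sum_mul, mul_comm]
  -- iterate
  have hiter : ∀ m : ℕ, S (m * ℓ) ≤ (1 - p) ^ m := by
    intro m
    induction m with
    | zero => simpa using hS_le_one 0
    | succ m ih =>
      have hmul : (m + 1) * ℓ = m * ℓ + ℓ := by ring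
      rw [hmul, pow_succ]
      calc S (m * ℓ + ℓ) ≤ (1 - p) * S (m * ℓ) := hstep _
        _ ≤ (1 - p) * (1 - p) ^ m := mul_le_mul_right ih _
        _ = (1 - p) ^ m * (1 - p) := mul_comm _ _
  rw [ae_iff]
  have hb : ∀ m : ℕ, μ {ω | ¬∃ n, 1 ≤ n ∧ fIter f ω x n ∈ Q} ≤ (1 - p) ^ m := by
    intro m
    have hsub : {ω : ℕ → Fin k | ¬∃ n, 1 ≤ n ∧ fIter f ω x n ∈ Q}
        ⊆ {ω | (fun i : Fin (m * ℓ) => ω i) ∈ E (m * ℓ)} := by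
      intro ω hω j hj1 hj2
      rw [take_ofFn_restrict f ω x hj2]
      intro hQ
      exact hω ⟨j, hj1, hQ⟩
    calc μ {ω | ¬∃ n, 1 ≤ n ∧ fIter f ω x n ∈ Q}
        ≤ μ {ω | (fun i : Fin (m * ℓ) => ω i) ∈ E (m * ℓ)} := measure_mono hsub
      _ = S (m * ℓ) := meas_restrict μ pw hcyl _ _
      _ ≤ (1 - p) ^ m := hiter m
  have hlt : (1 : ℝ≥0∞) - p < 1 :=
    ENNReal.sub_lt_self ENNReal.one_ne_top one_ne_zero hp.ne'
  have htend := ENNReal.tendsto_pow_atTop_nhds_zero_of_lt_one hlt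
  have hle0 : μ {ω | ¬∃ n, 1 ≤ n ∧ fIter f ω x n ∈ Q} ≤ 0 :=
    ge_of_tendsto htend (Filter.Eventually.of_forall hb)
  exact le_antisymm hle0 zero_le
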